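/- For any integers t ≥ 3 and k ≥ t, the radio k-labeling number of the infinite distance graph D(t-1,t) satisfies rl_k(D(t-1,t)) ≥ (t/2)k² - (t² - t + 1)k + t³/2 - t² + 3t/2 - 1. -/

import Mathlib

/-- The infinite distance graph on `ℤ` with distance set `D`: distinct integers
`i, j` are adjacent iff `|i - j| ∈ D`. -/
def distGraph (D : Set ℤ) : SimpleGraph ℤ where
  Adj i j := i ≠ j ∧ |i - j| ∈ D
  symm := by
    constructor
    intro i j h
    exact ⟨h.1.symm, by rw [abs_sub_comm]; exact h.2⟩
  loopless := by
    constructor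
    intro i h
    exact h.1 rfl

/-- `c : ℤ → ℕ` is a radio `k`-labeling of the graph `G` on `ℤ`:
`|c(u) - c(v)| ≥ k + 1 - d(u,v)` for all distinct `u, v`. -/
def IsRadioLabeling (G : SimpleGraph ℤ) (k : ℕ) (c : ℤ → ℕ) : Prop :=
  ∀ x y : ℤ, x ≠ y → (k : ℤ) + 1 - G.dist x y ≤ |(c x : ℤ) - c y|

abbrev GG (t : ℕ) : SimpleGraph ℤ := distGraph {(t : ℤ) - 1, (t : ℤ)}

section Dist

variable (t : ℕ) (ht : 3 ≤ t)



include ht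

lemma adj_step (x : ℤ) (e : ℤ) (he : e = (t:ℤ) - 1 ∨ e = (t:ℤ)) : (GG t).Adj x (x + e) := by
  have ht' : (3:ℤ) ≤ t := by exact_mod_cast ht
  constructor
  · rcases he with h | h <;> omega
  · have : |x - (x + e)| = e := by rcases he with h | h <;> rw [abs_sub_comm] <;> simp <;> omega
    rw [this]
    rcases he with h | h <;> simp [h]

lemma adj_step' (x : ℤ) (e : ℤ) (he : e = (t:ℤ) - 1 ∨ e = (t:ℤ)) : (GG t).Adj x (x - e) := by
  have := adj_step t ht (x - e) e he
  simpa using this.symm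

lemma reach_one (x : ℤ) : (GG t).Reachable x (x + 1) := by
  have h1 : (GG t).Adj x (x + t) := adj_step t ht x t (Or.inr rfl)
  have h2 : (GG t).Adj (x + t) (x + 1) := by
    have := adj_step' t ht (x + t) ((t:ℤ) - 1) (Or.inl rfl)
    have hx : x + t - ((t:ℤ) - 1) = x + 1 := by ring
    rwa [hx] at this
  exact h1.reachable.trans h2.reachable

lemma preconn : (GG t).Preconnected := by
  intro u v
  have key : ∀ z : ℤ, (GG t).Reachable u (u + z) := by
    intro z
    induction z using Int.induction_on with
    | zero => simpa using SimpleGraph.Reachable.refl u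
    | succ i ih =>
        have := reach_one t ht (u + i)
        have hx : u + i + 1 = u + ((i:ℤ) + 1) := by ring
        rw [hx] at this
        exact ih.trans this
    | pred i ih =>
        have := reach_one t ht (u + (-(i:ℤ) - 1))
        have hx : u + (-(i:ℤ) - 1) + 1 = u + (-(i:ℤ)) := by ring
        rw [hx] at this
        exact ih.trans this.symm
  have := key (v - u)
  simpa using this

lemma conn : (GG t).Connected := ⟨preconn t ht⟩

lemma dist_mul_step (e : ℤ) (he : e = (t:ℤ) - 1 ∨ e = (t:ℤ)) (x : ℤ) (z : ℤ) :
    (GG t).dist x (x + z * e) ≤ z.natAbs := by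
  induction z using Int.induction_on with
  | zero => simpa using le_refl _
  | succ i ih =>
      have htri := (conn t ht).dist_triangle (u := x) (v := x + i * e) (w := x + (i+1) * e)
      have hadj : (GG t).Adj (x + i * e) (x + ((i:ℤ)+1) * e) := by
        have := adj_step t ht (x + i * e) e he
        have hx : x + i * e + e = x + ((i:ℤ)+1) * e := by ring
        rwa [hx] at this
      have hd1 : (GG t).dist (x + i * e) (x + ((i:ℤ)+1)*e) = 1 :=
        (SimpleGraph.dist_eq_one_iff_adj).2 hadj
      omega
  | pred i ih =>
      have htri := (conn t ht).dist_triangle (u := x) (v := x + (-(i:ℤ)) * e) (w := x + (-(i:ℤ)-1) * e)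
      have hadj : (GG t).Adj (x + (-(i:ℤ)) * e) (x + (-(i:ℤ)-1) * e) := by
        have := adj_step' t ht (x + (-(i:ℤ)) * e) e he
        have hx : x + (-(i:ℤ)) * e - e = x + (-(i:ℤ)-1) * e := by ring
        rwa [hx] at this
      have hd1 : (GG t).dist (x + (-(i:ℤ))*e) (x + (-(i:ℤ)-1)*e) = 1 :=
        (SimpleGraph.dist_eq_one_iff_adj).2 hadj
      omega

lemma dist_comb (u : ℤ) (α β : ℤ) :
    (GG t).dist u (u + α * t + β * ((t:ℤ) - 1)) ≤ α.natAbs + β.natAbs := by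
  have h1 : (GG t).dist u (u + α * t) ≤ α.natAbs := dist_mul_step t ht _ (Or.inr rfl) u α
  have h2 : (GG t).dist (u + α * t) (u + α * t + β * ((t:ℤ)-1)) ≤ β.natAbs :=
    dist_mul_step t ht _ (Or.inl rfl) (u + α * t) β
  have h3 := (conn t ht).dist_triangle (u := u) (v := u + α * t) (w := u + α * t + β * ((t:ℤ)-1))
  omega


lemma dist_bound_pos (u s : ℤ) (hs : 0 < s) :
    (t:ℤ) * (GG t).dist u (u + s) ≤ s + (t:ℤ) * ((t:ℤ) - 1) := by
  have hT : (3:ℤ) ≤ (t:ℤ) := by exact_mod_cast ht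
  set T : ℤ := (t:ℤ) with hTdef
  have hT0 : (0:ℤ) ≤ T := by omega
  set q : ℤ := s / T with hq
  set r : ℤ := s % T with hr
  have hqr : T * q + r = s := Int.mul_ediv_add_emod s T
  have hr0 : 0 ≤ r := Int.emod_nonneg s (by omega)
  have hrT : r < T := Int.emod_lt_of_pos s (by omega)
  have hq0 : 0 ≤ q := Int.ediv_nonneg (le_of_lt hs) hT0
  -- helper to use dist_comb
  have key : ∀ α β : ℤ, u + α * T + β * (T - 1) = u + s →
      (((GG t).dist u (u + s) : ℤ)) ≤ |α| + |β| := by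
    intro α β hx
    have hd := dist_comb t ht u α β
    rw [hx] at hd
    have : (((GG t).dist u (u + s) : ℕ) : ℤ) ≤ ((α.natAbs + β.natAbs : ℕ) : ℤ) := by
      exact_mod_cast hd
    simpa [Int.natCast_natAbs] using this
  by_cases hr' : r = 0
  · have hdz := key q 0 (by linear_combination hqr - hr')
    rw [abs_of_nonneg hq0] at hdz
    simp at hdz
    have hmul := mul_le_mul_of_nonneg_left hdz hT0
    nlinarith
  · by_cases hbig : T - 1 ≤ r + q
    · -- B: q+1 steps
      have h1 : 0 ≤ r + q + 1 - T := by omega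
      have h2 : 0 ≤ T - r := by omega
      have hdz := key (r + q + 1 - T) (T - r) (by linear_combination hqr)
      rw [abs_of_nonneg h1, abs_of_nonneg h2] at hdz
      have hmul := mul_le_mul_of_nonneg_left hdz hT0
      nlinarith
    · by_cases hsm : 2 * r ≤ T - 1
      · -- C: q + 2r steps
        have hdz := key (q + r) (-r) (by linear_combination hqr)
        rw [abs_of_nonneg (by omega : (0:ℤ) ≤ q + r), abs_of_nonpos (by omega : -r ≤ 0)] at hdz
        have hmul := mul_le_mul_of_nonneg_left hdz hT0
        nlinarith
      · -- D: 2T - 2r - q - 1 steps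
        have hdz := key (r + q + 1 - T) (T - r) (by linear_combination hqr)
        rw [abs_of_nonpos (by omega : r + q + 1 - T ≤ 0), abs_of_nonneg (by omega : (0:ℤ) ≤ T - r)] at hdz
        have hmul := mul_le_mul_of_nonneg_left hdz hT0
        nlinarith

lemma dist_bound (u v : ℤ) (huv : u ≠ v) :
    (t:ℤ) * (GG t).dist u v ≤ |u - v| + (t:ℤ) * ((t:ℤ) - 1) := by
  rcases lt_or_gt_of_ne huv with h | h
  · have := dist_bound_pos t ht u (v - u) (by omega)
    have hx : u + (v - u) = v := by ring
    rw [hx] at this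
    rwa [abs_sub_comm, abs_of_pos (by omega : (0:ℤ) < v - u)]
  · have := dist_bound_pos t ht v (u - v) (by omega)
    have hx : v + (u - v) = u := by ring
    rw [hx] at this
    rw [SimpleGraph.dist_comm]
    rwa [abs_of_pos (by omega : (0:ℤ) < u - v)]

end Dist

open Finset in
lemma jump_sum (n : ℕ) (f : ℕ → ℕ) (hfn : ∀ i < n, f i < n)
    (hinj : ∀ i < n, ∀ j < n, f i = f j → i = j) :
    2 * (∑ i ∈ Finset.range (n-1), (max (f i) (f (i+1)) - min (f i) (f (i+1)))) ≤ n^2 := by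
  rcases Nat.eq_zero_or_pos n with rfl | hn
  · simp
  set m := n - 1 with hm
  have hnm : n = m + 1 := by omega
  -- Step 1: rewrite each jump as a crossing count
  have step1 : ∀ i ∈ Finset.range m,
      max (f i) (f (i+1)) - min (f i) (f (i+1))
        = ((Finset.range m).filter
            (fun j => min (f i) (f (i+1)) ≤ j ∧ j < max (f i) (f (i+1)))).card := by
    intro i hi
    rw [Finset.mem_range] at hi
    have h1 : f i < n := hfn i (by omega)
    have h2 : f (i+1) < n := hfn (i+1) (by omega)
    have : (Finset.range m).filter
            (fun j => min (f i) (f (i+1)) ≤ j ∧ j < max (f i) (f (i+1)))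
          = Finset.Ico (min (f i) (f (i+1))) (max (f i) (f (i+1))) := by
      ext j
      simp only [Finset.mem_filter, Finset.mem_range, Finset.mem_Ico]
      omega
    rw [this, Nat.card_Ico]
  rw [Finset.sum_congr rfl step1]
  -- Step 2: swap the two sums
  have step2 : ∑ i ∈ Finset.range m, ((Finset.range m).filter
            (fun j => min (f i) (f (i+1)) ≤ j ∧ j < max (f i) (f (i+1)))).card
      = ∑ j ∈ Finset.range m, ((Finset.range m).filter
            (fun i => min (f i) (f (i+1)) ≤ j ∧ j < max (f i) (f (i+1)))).card := by
    simp only [Finset.card_filter]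
    exact Finset.sum_comm
  rw [step2]
  set C : ℕ → ℕ := fun j => ((Finset.range m).filter
            (fun i => min (f i) (f (i+1)) ≤ j ∧ j < max (f i) (f (i+1)))).card with hC
  -- Step 3: crossing bounds
  -- generic counting helper
  have hcard : ∀ (g : ℕ → ℕ) (p : ℕ → Prop) (_ : DecidablePred p) (a b : ℕ),
      (∀ i, i < m → p i → a ≤ g i ∧ g i < b) →
      (∀ i i', i < m → i' < m → g i = g i' → i = i') →
      ((Finset.range m).filter p).card ≤ b - a := by
    intro g p hp a b hmem hginj
    have h := Finset.card_le_card_of_injOn (s := (Finset.range m).filter p)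
      (t := Finset.Ico a b) g ?_ ?_
    · simpa [Nat.card_Ico] using h
    · intro i hi
      simp only [Finset.coe_filter, Set.mem_setOf_eq, Finset.mem_filter, Finset.mem_range] at hi
      have := hmem i hi.1 hi.2
      simp only [Finset.coe_Ico, Set.mem_Ico, Finset.mem_Ico]
      omega
    · intro i hi i' hi' hii'
      simp only [Finset.coe_filter, Set.mem_setOf_eq, Finset.mem_range] at hi hi'
      exact hginj i i' hi.1 hi'.1 hii'
  have hfinj : ∀ i i', i < m → i' < m → f i = f i' → i = i' := by
    intro i i' h1 h2 h3; exact hinj i (by omega) i' (by omega) h3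
  have hfinj' : ∀ i i', i < m → i' < m → f (i+1) = f (i'+1) → i = i' := by
    intro i i' h1 h2 h3
    have := hinj (i+1) (by omega) (i'+1) (by omega) h3
    omega
  have step3 : ∀ j, C j ≤ 2 * (j+1) ∧ C j ≤ 2 * (n - (j+1)) := by
    intro j
    have hsplit : C j ≤ ((Finset.range m).filter (fun i => f i ≤ j ∧ j < f (i+1))).card
          + ((Finset.range m).filter (fun i => f (i+1) ≤ j ∧ j < f i)).card := by
      have heq : (Finset.range m).filter
              (fun i => min (f i) (f (i+1)) ≤ j ∧ j < max (f i) (f (i+1)))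
          = ((Finset.range m).filter (fun i => f i ≤ j ∧ j < f (i+1)))
            ∪ ((Finset.range m).filter (fun i => f (i+1) ≤ j ∧ j < f i)) := by
        rw [← Finset.filter_or]
        apply Finset.filter_congr
        intro i _
        simp only [min_le_iff, lt_max_iff, eq_iff_iff]
        constructor
        · rintro ⟨h1, h2⟩; omega
        · rintro (⟨h1,h2⟩|⟨h1,h2⟩) <;> omega
      show ((Finset.range m).filter
              (fun i => min (f i) (f (i+1)) ≤ j ∧ j < max (f i) (f (i+1)))).card ≤ _
      rw [heq]
      exact Finset.card_union_le _ _
    have hA1 : ((Finset.range m).filter (fun i => f i ≤ j ∧ j < f (i+1))).card ≤ j + 1 := by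
      have := hcard f (fun i => f i ≤ j ∧ j < f (i+1)) (by infer_instance) 0 (j+1)
        (fun i hi hpi => ⟨Nat.zero_le _, by omega⟩) hfinj
      simpa using this
    have hB1 : ((Finset.range m).filter (fun i => f (i+1) ≤ j ∧ j < f i)).card ≤ j + 1 := by
      have := hcard (fun i => f (i+1)) (fun i => f (i+1) ≤ j ∧ j < f i) (by infer_instance) 0 (j+1)
        (fun i hi hpi => ⟨Nat.zero_le _, by show f (i+1) < j + 1; omega⟩) hfinj'
      simpa using this
    have hA2 : ((Finset.range m).filter (fun i => f i ≤ j ∧ j < f (i+1))).card ≤ n - (j+1) := by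
      exact hcard (fun i => f (i+1)) (fun i => f i ≤ j ∧ j < f (i+1)) (by infer_instance) (j+1) n
        (fun i hi hpi => ⟨by show j + 1 ≤ f (i+1); omega, by show f (i+1) < n; exact hfn (i+1) (by omega)⟩) hfinj'
    have hB2 : ((Finset.range m).filter (fun i => f (i+1) ≤ j ∧ j < f i)).card ≤ n - (j+1) := by
      exact hcard f (fun i => f (i+1) ≤ j ∧ j < f i) (by infer_instance) (j+1) n
        (fun i hi hpi => ⟨by omega, hfn i (by omega)⟩) hfinj
    omega
  -- Step 4: sum the bounds
  set h : ℕ := m / 2 with hh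
  have hhm : h ≤ m := Nat.div_le_self m 2
  have hsum : ∑ j ∈ Finset.range m, C j
      = ∑ j ∈ Finset.Ico 0 h, C j + ∑ j ∈ Finset.Ico h m, C j := by
    rw [Finset.range_eq_Ico, ← Finset.sum_Ico_consecutive C (Nat.zero_le h) hhm]
  have hlow : ∑ j ∈ Finset.Ico 0 h, C j ≤ ∑ j ∈ Finset.range h, 2 * (j+1) := by
    rw [← Finset.range_eq_Ico]
    exact Finset.sum_le_sum (fun j _ => (step3 j).1)
  have hhigh : ∑ j ∈ Finset.Ico h m, C j ≤ ∑ j ∈ Finset.Ico h m, 2 * (n - (j+1)) := by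
    exact Finset.sum_le_sum (fun j _ => (step3 j).2)
  have hgauss1 : ∑ j ∈ Finset.range h, 2 * (j+1) = h * (h+1) := by
    induction h with
    | zero => simp
    | succ a iha => rw [Finset.sum_range_succ, iha]; ring
  have hgauss2 : ∑ j ∈ Finset.Ico h m, 2 * (n - (j+1)) = (m - h) * (m - h + 1) := by
    rw [Finset.sum_Ico_eq_sum_range]
    have : ∀ i ∈ Finset.range (m - h), 2 * (n - (h + i + 1)) = 2 * ((m-h) - i) := by
      intro i hi
      rw [Finset.mem_range] at hi
      omega
    rw [Finset.sum_congr rfl this]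
    set M := m - h with hM
    induction M with
    | zero => simp
    | succ a iha =>
        rw [Finset.sum_range_succ]
        have : ∀ i ∈ Finset.range a, 2 * (a + 1 - i) = 2 * (a - i) + 2 := by
          intro i hi; rw [Finset.mem_range] at hi; omega
        rw [Finset.sum_congr rfl this, Finset.sum_add_distrib, iha]
        simp [Finset.card_range]
        ring
  have hfinal : 2 * ∑ j ∈ Finset.range m, C j ≤ n ^ 2 := by
    rw [hsum]
    have h2 : 2 * h + m % 2 = m := by omega
    have hM : m - h = h + m % 2 := by omega
    have hmod : m % 2 = 0 ∨ m % 2 = 1 := by omega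
    rcases hmod with hmod | hmod <;>
      nlinarith [hlow, hhigh, hgauss1, hgauss2, hnm]
  exact hfinal


set_option maxHeartbeats 2000000 in
/-- For `t ≥ 3` and `k ≥ t`,
`rl_k(D(t-1,t)) ≥ (t/2)k² - (t² - t + 1)k + t³/2 - t² + 3t/2 - 1`. -/
theorem radio_lower_Dtsub1t (t k : ℕ) (ht : 3 ≤ t) (hk : t ≤ k) (c : ℤ → ℕ)
    (hc : IsRadioLabeling (distGraph {(t : ℤ) - 1, (t : ℤ)}) k c) :
    ∃ x y : ℤ,
      ((t : ℝ) / 2) * (k : ℝ) ^ 2 - ((t : ℝ) ^ 2 - t + 1) * k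
        + (t : ℝ) ^ 3 / 2 - (t : ℝ) ^ 2 + 3 * (t : ℝ) / 2 - 1
      ≤ (c x : ℝ) - c y := by
  classical
  set K : ℕ := k + 1 - t with hKdef
  have hK1 : 1 ≤ K := by omega
  set n : ℕ := t * K with hndef
  have hn3 : 3 ≤ n := by
    have : t * 1 ≤ t * K := Nat.mul_le_mul_left t hK1
    omega
  -- sort the vertices 0,...,n-1 by label
  let σ : Equiv.Perm (Fin n) := Tuple.sort (fun i : Fin n => c ((i : ℕ) : ℤ))
  let f : ℕ → ℕ := fun i => if h : i < n then ((σ ⟨i, h⟩ : Fin n) : ℕ) else i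
  have hfn : ∀ i < n, f i < n := by
    intro i hi
    simp only [f, dif_pos hi]
    exact (σ ⟨i, hi⟩).isLt
  have hinj : ∀ i < n, ∀ j < n, f i = f j → i = j := by
    intro i hi j hj hij
    simp only [f, dif_pos hi, dif_pos hj] at hij
    have := σ.injective (Fin.val_injective hij)
    exact congrArg Fin.val this
  have hmono : ∀ i, i + 1 < n → c ((f i : ℕ) : ℤ) ≤ c ((f (i+1) : ℕ) : ℤ) := by
    intro i hi1
    have hi : i < n := by omega
    have hm := Tuple.monotone_sort (fun i : Fin n => c ((i : ℕ) : ℤ))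
    have := hm (a := ⟨i, hi⟩) (b := ⟨i+1, hi1⟩) (by simp [Fin.mk_le_mk])
    simpa [f, dif_pos hi, dif_pos hi1] using this
  set F : ℕ → ℤ := fun i => (c ((f i : ℕ) : ℤ) : ℤ) with hF
  have htel : ∑ i ∈ Finset.range (n-1), (F (i+1) - F i) = F (n-1) - F 0 :=
    Finset.sum_range_sub F (n-1)
  have ht' : (3:ℤ) ≤ (t:ℤ) := by exact_mod_cast ht
  -- per-gap estimate
  have key : ∀ i ∈ Finset.range (n-1),
      (t:ℤ)*((k:ℤ)+1) - (t:ℤ)*((t:ℤ)-1)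
          - ((max (f i) (f (i+1)) - min (f i) (f (i+1)) : ℕ) : ℤ)
        ≤ (t:ℤ) * (F (i+1) - F i) := by
    intro i hi
    rw [Finset.mem_range] at hi
    have hi1 : i + 1 < n := by omega
    have ha : f i < n := hfn i (by omega)
    have hb : f (i+1) < n := hfn (i+1) hi1
    have hne : f i ≠ f (i+1) := by
      intro h
      have := hinj i (by omega) (i+1) hi1 h
      omega
    have hnez : ((f (i+1) : ℕ) : ℤ) ≠ ((f i : ℕ) : ℤ) := by
      intro h
      exact hne (by exact_mod_cast h.symm)
    have hmono' := hmono i hi1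
    have hlab := hc ((f (i+1) : ℕ) : ℤ) ((f i : ℕ) : ℤ) hnez
    have hmm : (c ((f i : ℕ) : ℤ) : ℤ) ≤ (c ((f (i+1) : ℕ) : ℤ) : ℤ) := by
      exact_mod_cast hmono'
    have habs : |(c ((f (i+1) : ℕ) : ℤ) : ℤ) - (c ((f i : ℕ) : ℤ) : ℤ)| = F (i+1) - F i := by
      rw [abs_of_nonneg (sub_nonneg.2 hmm)]
    rw [habs] at hlab
    have hd := dist_bound t ht ((f (i+1) : ℕ) : ℤ) ((f i : ℕ) : ℤ) hnez
    have hjump : |((f (i+1) : ℕ) : ℤ) - ((f i : ℕ) : ℤ)|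
        = ((max (f i) (f (i+1)) - min (f i) (f (i+1)) : ℕ) : ℤ) := by
      rcases le_total (f i) (f (i+1)) with h | h
      · rw [max_eq_right h, min_eq_left h,
          abs_of_nonneg (by exact_mod_cast sub_nonneg.2 (by exact_mod_cast h : ((f i : ℕ):ℤ) ≤ ((f (i+1) : ℕ):ℤ)))]
        push_cast [h]
        ring
      · rw [max_eq_left h, min_eq_right h,
          abs_of_nonpos (by exact_mod_cast sub_nonpos.2 (by exact_mod_cast h : ((f (i+1) : ℕ):ℤ) ≤ ((f i : ℕ):ℤ)))]
        push_cast [h]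
        ring
    rw [hjump] at hd
    have ht0 : (0:ℤ) ≤ (t:ℤ) := by omega
    have hmul := mul_le_mul_of_nonneg_left hlab ht0
    -- hmul : t * (k+1-dist) ≤ t * (F(i+1)-F i)
    nlinarith [hd, hmul]
  -- sum up
  have hsumle := Finset.sum_le_sum key
  have hJ := jump_sum n f hfn hinj
  set J : ℕ := ∑ i ∈ Finset.range (n-1), (max (f i) (f (i+1)) - min (f i) (f (i+1))) with hJdef
  have hLHS : ∑ i ∈ Finset.range (n-1),
      ((t:ℤ)*((k:ℤ)+1) - (t:ℤ)*((t:ℤ)-1)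
          - ((max (f i) (f (i+1)) - min (f i) (f (i+1)) : ℕ) : ℤ))
      = ((n:ℤ) - 1) * ((t:ℤ)*((k:ℤ)+1) - (t:ℤ)*((t:ℤ)-1)) - (J:ℤ) := by
    rw [Finset.sum_sub_distrib, Finset.sum_const, Finset.card_range, hJdef]
    push_cast
    have : ((n-1 : ℕ) : ℤ) = (n:ℤ) - 1 := by
      have : 1 ≤ n := by omega
      push_cast [this]
      ring
    rw [nsmul_eq_mul, this]
  have hRHS : ∑ i ∈ Finset.range (n-1), (t:ℤ) * (F (i+1) - F i)
      = (t:ℤ) * (F (n-1) - F 0) := by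
    rw [← Finset.mul_sum, htel]
  rw [hLHS, hRHS] at hsumle
  -- final arithmetic
  refine ⟨((f (n-1) : ℕ) : ℤ), ((f 0 : ℕ) : ℤ), ?_⟩
  have hKZ : (K:ℤ) = (k:ℤ) + 1 - (t:ℤ) := by
    have : t ≤ k + 1 := by omega
    push_cast [hKdef, this]
    ring
  have hnZ : (n:ℤ) = (t:ℤ) * (K:ℤ) := by push_cast [hndef]; ring
  have hJZ : 2 * (J:ℤ) ≤ (n:ℤ)^2 := by exact_mod_cast hJ
  have hKZ1 : (1:ℤ) ≤ (K:ℤ) := by exact_mod_cast hK1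
  set S : ℤ := F (n-1) - F 0 with hS
  have hmain : (t:ℤ)^2 * (K:ℤ)^2 - 2*(t:ℤ)*(K:ℤ) ≤ 2*(t:ℤ)*S := by
    have hconst : (t:ℤ)*((k:ℤ)+1) - (t:ℤ)*((t:ℤ)-1) = (t:ℤ) * ((K:ℤ)+1) := by
      rw [hKZ]; ring
    rw [hconst, hnZ] at hsumle
    rw [hnZ] at hJZ
    have htK : (1:ℤ) ≤ (t:ℤ) * (K:ℤ) := by nlinarith
    nlinarith [hsumle, hJZ, htK]
  -- move to ℝ
  have hmainR : ((t:ℝ))^2 * ((K:ℕ):ℝ)^2 - 2*(t:ℝ)*((K:ℕ):ℝ)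
      ≤ 2*(t:ℝ)*((c ((f (n-1) : ℕ) : ℤ) : ℝ) - (c ((f 0 : ℕ) : ℤ) : ℝ)) := by
    have : ((((t:ℤ)^2 * (K:ℤ)^2 - 2*(t:ℤ)*(K:ℤ)) : ℤ) : ℝ) ≤ (((2*(t:ℤ)*S) : ℤ) : ℝ) := by
      exact_mod_cast hmain
    push_cast [hS, hF] at this ⊢
    convert this using 2 <;> push_cast <;> ring
  have hKR : ((K:ℕ):ℝ) = (k:ℝ) + 1 - (t:ℝ) := by exact_mod_cast hKZ
  have ht0R : (0:ℝ) < (t:ℝ) := by exact_mod_cast (by omega : 0 < t)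
  have hexpr : ((t : ℝ) / 2) * (k : ℝ) ^ 2 - ((t : ℝ) ^ 2 - t + 1) * k
        + (t : ℝ) ^ 3 / 2 - (t : ℝ) ^ 2 + 3 * (t : ℝ) / 2 - 1
      = (t:ℝ) * ((K:ℕ):ℝ)^2 / 2 - ((K:ℕ):ℝ) := by
    rw [hKR]; ring
  rw [hexpr]
  nlinarith [hmainR, ht0R]
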